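/- For every integer k ≥ 3 such that the Fermat number F_k = 2^(2^k) + 1 is prime, F_k is an ndh-number. -/

import Mathlib

/-- A harmonic number is a positive integer of the form 2^a * 3^b. -/
def IsHarmonic (n : ℕ) : Prop := ∃ a b : ℕ, n = 2 ^ a * 3 ^ b

/-- An ndh-number is a positive integer that cannot be written as a difference
h - k of two harmonic numbers h and k. -/
def IsNdh (n : ℕ) : Prop :=
  0 < n ∧ ¬ ∃ h k : ℕ, IsHarmonic h ∧ IsHarmonic k ∧ n + k = h

lemma pow_mod_cycle (x T n b : ℕ) (hn : 1 < n) (hT : x ^ T % n = 1) :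
    x ^ b % n = x ^ (b % T) % n := by
  conv_lhs => rw [← Nat.div_add_mod b T]
  rw [pow_add, pow_mul, Nat.mul_mod, Nat.pow_mod, hT, one_pow,
    Nat.mod_eq_of_lt hn, one_mul]
  exact Nat.mod_mod_of_dvd _ dvd_rfl

lemma three_pow_mod8 (b : ℕ) : 3 ^ b % 8 = 1 ∨ 3 ^ b % 8 = 3 := by
  rw [pow_mod_cycle 3 2 8 b (by norm_num) (by norm_num)]
  rcases Nat.mod_two_eq_zero_or_one b with h | h <;> rw [h] <;> norm_num

lemma three_pow_mod8_of_odd (b : ℕ) (hb : b % 2 = 1) : 3 ^ b % 8 = 3 := by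
  rw [pow_mod_cycle 3 2 8 b (by norm_num) (by norm_num), hb]
  norm_num

lemma two_pow_mod3 (c : ℕ) : 2 ^ c % 3 = 2 ^ (c % 2) % 3 :=
  pow_mod_cycle 2 2 3 c (by norm_num) (by norm_num)

/-- For s ≥ 4, 3^m ≠ 2^s + 1. -/
lemma aux_ne (m s : ℕ) (hs : 4 ≤ s) : 3 ^ m ≠ 2 ^ s + 1 := by
  intro h
  have h16 : (16:ℕ) ∣ 2 ^ s := by
    calc (16:ℕ) = 2 ^ 4 := by norm_num
    _ ∣ 2 ^ s := pow_dvd_pow 2 hs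
  have hm16 : 3 ^ m % 16 = 3 ^ (m % 4) % 16 :=
    pow_mod_cycle 3 4 16 m (by norm_num) (by norm_num)
  have h1 : 3 ^ m % 16 = 1 := by omega
  have hm4 : m % 4 = 0 := by
    have : m % 4 = 0 ∨ m % 4 = 1 ∨ m % 4 = 2 ∨ m % 4 = 3 := by omega
    rcases this with h' | h' | h' | h' <;> rw [h'] at hm16 <;> norm_num at hm16 <;> omega
  have hm5 : 3 ^ m % 5 = 3 ^ (m % 4) % 5 :=
    pow_mod_cycle 3 4 5 m (by norm_num) (by norm_num)
  rw [hm4] at hm5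
  norm_num at hm5
  have h5 : 2 ^ s % 5 = 0 := by omega
  have hdvd : (5:ℕ) ∣ 2 ^ s := Nat.dvd_of_mod_eq_zero h5
  have := Nat.Prime.dvd_of_dvd_pow (by norm_num) hdvd
  omega

/-- Every Fermat prime F_k = 2^(2^k) + 1 with k ≥ 3 is an ndh-number. -/
theorem ndh_fermat_prime (k : ℕ) (hk : 3 ≤ k) (hp : Nat.Prime (2 ^ 2 ^ k + 1)) :
    IsNdh (2 ^ 2 ^ k + 1) := by
  obtain ⟨E, hE⟩ : ∃ E, E = 2 ^ k := ⟨_, rfl⟩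
  rw [← hE] at hp ⊢
  have hE8 : 8 ≤ E := by
    rw [hE]
    calc (8:ℕ) = 2 ^ 3 := by norm_num
    _ ≤ 2 ^ k := Nat.pow_le_pow_right (by norm_num) hk
  have hE2 : 2 ∣ E := by rw [hE]; exact dvd_pow_self 2 (by omega)
  have hbig : 256 ≤ 2 ^ E := by
    calc (256:ℕ) = 2 ^ 8 := by norm_num
    _ ≤ 2 ^ E := Nat.pow_le_pow_right (by norm_num) hE8
  have h2 : (2:ℕ) ∣ 2 ^ E := dvd_pow_self 2 (by omega)
  have h4 : (4:ℕ) ∣ 2 ^ E := by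
    have : (2:ℕ) ^ 2 ∣ 2 ^ E := pow_dvd_pow 2 (by omega)
    simpa using this
  have h8 : (8:ℕ) ∣ 2 ^ E := by
    have : (2:ℕ) ^ 3 ∣ 2 ^ E := pow_dvd_pow 2 (by omega)
    simpa using this
  have h2E3 : 2 ^ E % 3 = 1 := by
    rw [two_pow_mod3]
    have : E % 2 = 0 := by omega
    rw [this]
    norm_num
  refine ⟨by positivity, ?_⟩
  rintro ⟨h, kk, ⟨a, b, rfl⟩, ⟨c, d, rfl⟩, heq⟩
  have hac : a = 0 ∨ c = 0 := by
    by_contra hcon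
    push_neg at hcon
    have h1 : (2:ℕ) ∣ 2 ^ a * 3 ^ b := Dvd.dvd.mul_right (dvd_pow_self 2 hcon.1) _
    have h1' : (2:ℕ) ∣ 2 ^ c * 3 ^ d := Dvd.dvd.mul_right (dvd_pow_self 2 hcon.2) _
    omega
  have hbd : b = 0 ∨ d = 0 := by
    by_contra hcon
    push_neg at hcon
    have h1 : (3:ℕ) ∣ 2 ^ a * 3 ^ b := Dvd.dvd.mul_left (dvd_pow_self 3 hcon.1) _
    have h1' : (3:ℕ) ∣ 2 ^ c * 3 ^ d := Dvd.dvd.mul_left (dvd_pow_self 3 hcon.2) _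
    omega
  rcases hac with rfl | rfl <;> rcases hbd with rfl | rfl <;>
    simp only [pow_zero, one_mul, mul_one] at heq
  · -- a = 0, b = 0 : h = 1
    have : 0 < 2 ^ c * 3 ^ d := by positivity
    omega
  · -- a = 0, d = 0 : 2^E + 1 + 2^c = 3^b
    have hb1 : b ≠ 0 := by
      rintro rfl
      rw [pow_zero] at heq
      have : 0 < 2 ^ c := pow_pos (by norm_num) c
      omega
    have h3b : (3:ℕ) ∣ 3 ^ b := dvd_pow_self 3 hb1
    have hc3 := two_pow_mod3 c
    have hceven : c % 2 = 0 := by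
      rcases Nat.mod_two_eq_zero_or_one c with h' | h'
      · exact h'
      · rw [h'] at hc3; norm_num at hc3; omega
    have h3bodd : 3 ^ b % 2 = 1 := by
      rw [Nat.pow_mod]; norm_num
    have h3b8 := three_pow_mod8 b
    have hcase : c = 0 ∨ c = 2 ∨ 4 ≤ c := by omega
    rcases hcase with rfl | rfl | hc4
    · omega
    · omega
    · have h8c : (8:ℕ) ∣ 2 ^ c := by
        have : (2:ℕ) ^ 3 ∣ 2 ^ c := pow_dvd_pow 2 (by omega)
        simpa using this
      have hbeven : b % 2 = 0 := by
        rcases Nat.mod_two_eq_zero_or_one b with h' | h'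
        · exact h'
        · have := three_pow_mod8_of_odd b h'
          omega
      obtain ⟨m, rfl⟩ : ∃ m, b = 2 * m := ⟨b / 2, by omega⟩
      obtain ⟨j, rfl⟩ : ∃ j, c = 2 * j := ⟨c / 2, by omega⟩
      have hsq : (2 ^ j) ^ 2 + (2 ^ E + 1) = (3 ^ m) ^ 2 := by
        rw [← pow_mul, ← pow_mul, mul_comm j 2, mul_comm m 2]
        omega
      have hle : 2 ^ j ≤ 3 ^ m := by
        by_contra hle2
        push_neg at hle2
        have : (3 ^ m) ^ 2 ≤ (2 ^ j) ^ 2 := Nat.pow_le_pow_left hle2.le 2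
        omega
      have key : (3 ^ m - 2 ^ j) * (3 ^ m + 2 ^ j) = 2 ^ E + 1 := by
        zify [hle]
        zify at hsq
        linear_combination -hsq
      have hdvd : (3 ^ m - 2 ^ j) ∣ (2 ^ E + 1) := ⟨_, key.symm⟩
      rcases hp.eq_one_or_self_of_dvd _ hdvd with h1 | h1
      · have hm3 : 3 ^ m = 2 ^ j + 1 := by omega
        have hsum : 3 ^ m + 2 ^ j = 2 ^ E + 1 := by rw [h1, one_mul] at key; exact key
        have h2j : 2 ^ (j + 1) = 2 ^ E := by rw [pow_succ]; omega
        have hje : j + 1 = E := Nat.pow_right_injective (by norm_num) h2j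
        exact aux_ne m j (by omega) hm3
      · rw [h1] at key
        have hone : 3 ^ m + 2 ^ j = 1 := by
          have hpos : 0 < 2 ^ E + 1 := by positivity
          have : (2 ^ E + 1) * (3 ^ m + 2 ^ j) = (2 ^ E + 1) * 1 := by
            simpa using key
          exact Nat.eq_of_mul_eq_mul_left hpos this
        have hp1 : 1 ≤ 3 ^ m := Nat.one_le_pow _ _ (by norm_num)
        have hp2 : 1 ≤ 2 ^ j := Nat.one_le_pow _ _ (by norm_num)
        omega
  · -- c = 0, b = 0 : 2^E + 1 + 3^d = 2^a
    have hd1 : 1 ≤ 3 ^ d := Nat.one_le_pow _ _ (by norm_num)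
    have ha3 : 3 ≤ a := by
      by_contra h'
      push_neg at h'
      interval_cases a <;> omega
    have h8a : (8:ℕ) ∣ 2 ^ a := by
      have : (2:ℕ) ^ 3 ∣ 2 ^ a := pow_dvd_pow 2 ha3
      simpa using this
    have := three_pow_mod8 d
    omega
  · -- c = 0, d = 0 : 2^E + 2 = 2^a * 3^b
    have h3bodd : 3 ^ b % 2 = 1 := by
      rw [Nat.pow_mod]; norm_num
    rcases a with _ | a
    · simp at heq
      omega
    rcases a with _ | a
    · obtain ⟨t, ht⟩ : ∃ t, E = t + 1 := ⟨E - 1, by omega⟩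
      rw [ht, pow_succ 2 t] at heq
      have hb3 : 3 ^ b = 2 ^ t + 1 := by
        rw [pow_one] at heq
        omega
      exact aux_ne b t (by omega) hb3
    · have h4a : 2 ^ (a + 1 + 1) * 3 ^ b = 4 * (2 ^ a * 3 ^ b) := by ring
      omega
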